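/- Let n, c, d be positive integers, let x : [n] → [c] be a token sequence, let V = {v_k}_{k=1}^n be a good sequence in ℝ^d converging to latent representations Z = {z_x}_{x∈[c]} with parameter γ > 0, and let A ∈ ℝ^{n×n} be a nice attention map with parameter ψ that reflects a function f : [c] → [c] (i.e. a_{k,j} > 0 implies x_j = f(x_k)). Then the sequence AV is a good sequence converging to the latent representations Z' = {z_{f(x)}}_{x∈[c]} with parameter 2γψ + c(γ + 2N), where N = max_{x∈[c]} ‖z_x‖. -/

import Mathlib

open Finset

lemma abel_aux (dd g : ℕ → ℝ) :
    ∀ k, 1 ≤ k → (∀ j, 1 ≤ j → g (j+1) ≤ g j) → (∀ j, 1 ≤ j → 0 ≤ g j) →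
    (∀ j, 1 ≤ j → j < k → ∑ i ∈ Icc 1 j, dd i ≤ 0) →
    ∑ j ∈ Icc 1 k, dd j * g j ≤ (∑ j ∈ Icc 1 k, dd j) * g k := by
  intro k
  induction k with
  | zero => intro h; omega
  | succ m ih =>
    intro _ hg hgnn hS
    rcases Nat.eq_zero_or_pos m with hm | hm
    · subst hm; simp
    have h1 : ∑ j ∈ Icc 1 (m+1), dd j * g j
        = (∑ j ∈ Icc 1 m, dd j * g j) + dd (m+1) * g (m+1) := by
      rw [Finset.sum_Icc_succ_top (by omega)]
    have h2 : ∑ j ∈ Icc 1 (m+1), dd j = (∑ j ∈ Icc 1 m, dd j) + dd (m+1) := by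
      rw [Finset.sum_Icc_succ_top (by omega)]
    have hih := ih hm hg hgnn (fun j hj hjm => hS j hj (by omega))
    have hDm : ∑ j ∈ Icc 1 m, dd j ≤ 0 := hS m hm (by omega)
    have hmono : (∑ j ∈ Icc 1 m, dd j) * g m ≤ (∑ j ∈ Icc 1 m, dd j) * g (m+1) :=
      mul_le_mul_of_nonpos_left (hg m hm) hDm
    rw [h1, h2]
    nlinarith
lemma abel_le (a b g : ℕ → ℝ) (k : ℕ) (hk : 1 ≤ k)
    (hg : ∀ j, 1 ≤ j → g (j+1) ≤ g j) (hgnn : ∀ j, 1 ≤ j → 0 ≤ g j)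
    (hS : ∀ j, 1 ≤ j → j ≤ k → ∑ i ∈ Icc 1 j, a i ≤ ∑ i ∈ Icc 1 j, b i) :
    ∑ j ∈ Icc 1 k, a j * g j ≤ ∑ j ∈ Icc 1 k, b j * g j := by
  have h := abel_aux (fun j => a j - b j) g k hk hg hgnn (by
    intro j hj hjk
    have := hS j hj (le_of_lt hjk)
    simp only [Finset.sum_sub_distrib]
    linarith)
  simp only [sub_mul, Finset.sum_sub_distrib] at h
  have hD : ∑ i ∈ Icc 1 k, a i - ∑ i ∈ Icc 1 k, b i ≤ 0 := by
    have := hS k hk le_rfl; linarith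
  nlinarith [hgnn k hk, mul_nonpos_of_nonpos_of_nonneg hD (hgnn k hk)]

lemma sum_inv_sqrt_le (k : ℕ) : ∑ j ∈ Icc 1 k, 1 / Real.sqrt j ≤ 2 * Real.sqrt k := by
  induction k with
  | zero => simp
  | succ m ih =>
    rw [Finset.sum_Icc_succ_top (by omega)]
    have hs : Real.sqrt (m+1) > 0 := Real.sqrt_pos.mpr (by positivity)
    have ht : Real.sqrt (m:ℝ) ≥ 0 := Real.sqrt_nonneg _
    have hs2 : Real.sqrt ((m:ℝ)+1) ^ 2 = (m:ℝ)+1 := Real.sq_sqrt (by positivity)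
    have ht2 : Real.sqrt (m:ℝ) ^ 2 = (m:ℝ) := Real.sq_sqrt (by positivity)
    have key : 1 / Real.sqrt ((m:ℝ)+1) ≤ 2 * (Real.sqrt ((m:ℝ)+1) - Real.sqrt (m:ℝ)) := by
      rw [div_le_iff₀ (by push_cast at hs ⊢; exact hs)]
      nlinarith [sq_nonneg (Real.sqrt ((m:ℝ)+1) - Real.sqrt (m:ℝ))]
    push_cast
    push_cast at ih
    linarith

/-- If `V = {v k}` is a good sequence converging to latent
representations `z` with parameter `γ`, and `A` is a nice attention map with
parameter `ψ` reflecting a function `f : [c] → [c]` (i.e. `A k j > 0` implies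
`x j = f (x k)`), then `A V` is a good sequence converging to
`{z (f x)}_{x ∈ [c]}` with parameter `2γψ + c(γ + 2N)`, where
`N = max_{x ∈ [c]} ‖z x‖`. -/
theorem attention_reflecting_function_good_sequence
    (n c d : ℕ) (hn : 1 ≤ n) (hc : 1 ≤ c) (hd : 1 ≤ d)
    (x : ℕ → ℕ) (hx : ∀ k ∈ Icc 1 n, x k ∈ Icc 1 c)
    (v z : ℕ → EuclideanSpace ℝ (Fin d)) (γ ψ : ℝ) (hγ : 0 < γ) (hψ : 0 < ψ)
    (A : ℕ → ℕ → ℝ)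
    (hA_nonneg : ∀ k j, 0 ≤ A k j)
    (hA_tri : ∀ k j, k < j → A k j = 0)
    (hA_row : ∀ k ∈ Icc 1 n, ∑ j ∈ Icc 1 k, A k j = 1)
    (hA_nice : ∀ k ∈ Icc 1 n, ∀ j ∈ Icc 1 k,
      ∑ i ∈ Icc 1 j, A k i ≤ ψ * j / k)
    (f : ℕ → ℕ) (hf : ∀ y ∈ Icc 1 c, f y ∈ Icc 1 c)
    (hreflect : ∀ k ∈ Icc 1 n, ∀ j ∈ Icc 1 k, 0 < A k j → x j = f (x k))
    (hgood : ∀ k ∈ Icc 1 n, ‖v k - z (x k)‖ ≤ γ / Real.sqrt k) :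
    ∀ k ∈ Icc 1 n,
      ‖(∑ j ∈ Icc 1 k, A k j • v j) - z (f (x k))‖ ≤
        (2 * γ * ψ +
            c * (γ + 2 * ((Icc 1 c).sup' (Finset.nonempty_Icc.mpr hc)
              (fun y => ‖z y‖)))) / Real.sqrt k := by
  intro k hk
  obtain ⟨hk1, hkn⟩ := Finset.mem_Icc.mp hk
  have hkpos : (0:ℝ) < (k:ℝ) := by exact_mod_cast hk1
  have hsk : 0 < Real.sqrt k := Real.sqrt_pos.mpr hkpos
  set N := (Icc 1 c).sup' (Finset.nonempty_Icc.mpr hc) (fun y => ‖z y‖) with hN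
  have hNnn : 0 ≤ N := le_trans (norm_nonneg (z 1))
    (Finset.le_sup' (fun y => ‖z y‖) (Finset.mem_Icc.mpr ⟨le_refl 1, hc⟩))
  -- rewrite the difference
  have h1 : ∑ j ∈ Icc 1 k, A k j • z (x j) = ∑ j ∈ Icc 1 k, A k j • z (f (x k)) := by
    apply Finset.sum_congr rfl
    intro j hj
    rcases lt_or_eq_of_le (hA_nonneg k j) with h | h
    · rw [hreflect k hk j hj h]
    · rw [← h, zero_smul, zero_smul]
  have key : ∑ j ∈ Icc 1 k, A k j • (v j - z (x j))
      = (∑ j ∈ Icc 1 k, A k j • v j) - z (f (x k)) := by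
    simp_rw [smul_sub]
    rw [Finset.sum_sub_distrib, h1, ← Finset.sum_smul, hA_row k hk, one_smul]
  rw [← key]
  -- norm bound
  have step1 : ‖∑ j ∈ Icc 1 k, A k j • (v j - z (x j))‖
      ≤ ∑ j ∈ Icc 1 k, A k j * (γ / Real.sqrt j) := by
    refine le_trans (norm_sum_le _ _) (Finset.sum_le_sum ?_)
    intro j hj
    obtain ⟨hj1, hjk⟩ := Finset.mem_Icc.mp hj
    rw [norm_smul, Real.norm_eq_abs, abs_of_nonneg (hA_nonneg k j)]
    exact mul_le_mul_of_nonneg_left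
      (hgood j (Finset.mem_Icc.mpr ⟨hj1, le_trans hjk hkn⟩)) (hA_nonneg k j)
  -- Abel bound
  have step2 : ∑ j ∈ Icc 1 k, A k j * (γ / Real.sqrt j)
      ≤ ∑ j ∈ Icc 1 k, (ψ / k) * (γ / Real.sqrt j) := by
    apply abel_le _ _ _ k hk1
    · intro j hj
      have h0 : (0:ℝ) < Real.sqrt j := Real.sqrt_pos.mpr (by exact_mod_cast hj)
      have h1' : Real.sqrt (j:ℝ) ≤ Real.sqrt ((j:ℝ)+1) := Real.sqrt_le_sqrt (by linarith)
      push_cast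
      exact div_le_div_of_nonneg_left (le_of_lt hγ) h0 h1' |>.trans_eq rfl
    · intro j hj
      positivity
    · intro j hj1 hjk
      have := hA_nice k hk j (Finset.mem_Icc.mpr ⟨hj1, hjk⟩)
      rw [Finset.sum_const, Nat.card_Icc]
      simp only [Nat.add_sub_cancel, nsmul_eq_mul]
      calc ∑ i ∈ Icc 1 j, A k i ≤ ψ * j / k := this
        _ = (j:ℝ) * (ψ / k) := by ring
  have step3 : ∑ j ∈ Icc 1 k, (ψ / k) * (γ / Real.sqrt j)
      ≤ 2 * γ * ψ / Real.sqrt k := by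
    have heq : ∀ j ∈ Icc 1 k, (ψ / k) * (γ / Real.sqrt j)
        = (ψ * γ / k) * (1 / Real.sqrt j) := by intro j _; ring
    rw [Finset.sum_congr rfl heq, ← Finset.mul_sum]
    have hsum := sum_inv_sqrt_le k
    have hfac : (0:ℝ) ≤ ψ * γ / k := by positivity
    have := mul_le_mul_of_nonneg_left hsum hfac
    refine le_trans this (le_of_eq ?_)
    have hkk : Real.sqrt k * Real.sqrt k = (k:ℝ) := Real.mul_self_sqrt (le_of_lt hkpos)
    field_simp
    linear_combination hkk
  have step4 : 2 * γ * ψ / Real.sqrt k ≤ (2 * γ * ψ + c * (γ + 2 * N)) / Real.sqrt k := by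
    apply (div_le_div_iff_of_pos_right hsk).mpr
    nlinarith [Nat.cast_nonneg (α := ℝ) c]
  linarith
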